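/- Suppose ψ₀, ψ₁ ∈ Q with ψ₀^c + ψ₁^c = 2ψ^c pointwise on A, where ψ = (ψ₀+ψ₁)/2 ∈ Q. If m ∈ A is such that ∂^c ψ^c(m) = {n} is a singleton, then ψ_i^c(m) = ⟨m,n⟩ − ψ_i(n) for i = 0, 1; in particular n ∈ ∂^c ψ₀^c(m) ∩ ∂^c ψ₁^c(m). -/

import Mathlib

variable {V : Type*} [NormedAddCommGroup V] [InnerProductSpace ℝ V]

/-- c-transform with respect to the compact set `B`: `f^c(x) = sup_{n∈B}(⟨x,n⟩ − f(n))`. -/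
noncomputable def ctB (B : Set V) (f : V → ℝ) : V → ℝ :=
  fun x => ⨆ n : B, ((inner ℝ x (n : V) : ℝ) - f n)

/-- Double c-transform: `f^{cc}(y) = sup_{m∈A}(⟨m,y⟩ − f^c(m))`. -/
noncomputable def cctAB (A B : Set V) (f : V → ℝ) : V → ℝ :=
  fun y => ⨆ x : A, ((inner ℝ (x : V) y : ℝ) - ctB B f x)

/-- `ctB B f x` is bounded below by a junk-robust quantity. -/
lemma ctB_ge_min (B : Set V) (f : V → ℝ) (x : V) {n₀ : V} (hn₀ : n₀ ∈ B) :
    min 0 ((inner ℝ x n₀ : ℝ) - f n₀) ≤ ctB B f x := by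
  by_cases h : BddAbove (Set.range fun n : B => ((inner ℝ x (n : V) : ℝ) - f n))
  · exact le_trans (min_le_right _ _) (le_ciSup h ⟨n₀, hn₀⟩)
  · rw [ctB, Real.iSup_of_not_bddAbove h]
    exact min_le_left _ _

/-- On a compact set `A`, `ctB B f` is bounded below. -/
lemma ctB_bddBelow_on (A B : Set V) (hAcpt : IsCompact A) (f : V → ℝ)
    {n₀ : V} (hn₀ : n₀ ∈ B) : ∃ c : ℝ, ∀ x ∈ A, c ≤ ctB B f x := by
  obtain ⟨R, hR⟩ := hAcpt.isBounded.exists_norm_le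
  refine ⟨min 0 (-(R * ‖n₀‖) - f n₀), fun x hx => ?_⟩
  refine le_trans ?_ (ctB_ge_min B f x hn₀)
  apply min_le_min le_rfl
  have h1 : -(‖x‖ * ‖n₀‖) ≤ (inner ℝ x n₀ : ℝ) := neg_le_of_abs_le (abs_real_inner_le_norm x n₀)
  have h2 : ‖x‖ * ‖n₀‖ ≤ R * ‖n₀‖ := mul_le_mul_of_nonneg_right (hR x hx) (norm_nonneg _)
  linarith

/-- On `B`, a function equal to its double transform dominates each affine minorant. -/
lemma double_transform_ge (A B : Set V) (hAcpt : IsCompact A) (hBne : B.Nonempty)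
    (f : V → ℝ) (hQ : ∀ n ∈ B, cctAB A B f n = f n)
    {m : V} (hm : m ∈ A) {n : V} (hn : n ∈ B) :
    (inner ℝ m n : ℝ) - f n ≤ ctB B f m := by
  obtain ⟨n₀, hn₀⟩ := hBne
  obtain ⟨c, hc⟩ := ctB_bddBelow_on A B hAcpt f hn₀
  obtain ⟨R, hR⟩ := hAcpt.isBounded.exists_norm_le
  have hbdd : BddAbove (Set.range fun x : A => ((inner ℝ (x : V) n : ℝ) - ctB B f x)) := by
    refine ⟨R * ‖n‖ - c, ?_⟩
    rintro _ ⟨⟨x, hx⟩, rfl⟩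
    have h1 : (inner ℝ x n : ℝ) ≤ ‖x‖ * ‖n‖ := real_inner_le_norm x n
    have h2 : ‖x‖ * ‖n‖ ≤ R * ‖n‖ := mul_le_mul_of_nonneg_right (hR x hx) (norm_nonneg _)
    have h3 := hc x hx
    simp only
    linarith
  have : (inner ℝ m n : ℝ) - ctB B f m ≤ cctAB A B f n := le_ciSup hbdd ⟨m, hm⟩
  rw [hQ n hn] at this
  linarith

/-- If `ψ₀, ψ₁ ∈ Q` with `ψ₀^c + ψ₁^c = 2ψ^c` on `A`, where `ψ = (ψ₀+ψ₁)/2 ∈ Q`, and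
`m ∈ A` has c-subgradient `∂^c ψ^c(m) = {n}` a singleton, then
`ψᵢ^c(m) = ⟨m,n⟩ − ψᵢ(n)` for `i = 0, 1`. -/
theorem average_cSubgradient {W : Type*} [NormedAddCommGroup W] [InnerProductSpace ℝ W]
    [FiniteDimensional ℝ W]
    (A B : Set W) (hAcpt : IsCompact A) (hBcpt : IsCompact B)
    (hAne : A.Nonempty) (hBne : B.Nonempty)
    (ψ₀ ψ₁ : W → ℝ)
    (hQ₀ : ∀ n ∈ B, cctAB A B ψ₀ n = ψ₀ n)
    (hQ₁ : ∀ n ∈ B, cctAB A B ψ₁ n = ψ₁ n)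
    (ψ : W → ℝ) (hψdef : ψ = fun n => (ψ₀ n + ψ₁ n) / 2)
    (hψQ : ∀ n ∈ B, cctAB A B ψ n = ψ n)
    (hsum : ∀ m ∈ A, ctB B ψ₀ m + ctB B ψ₁ m = 2 * ctB B ψ m)
    (m : W) (hm : m ∈ A) (n : W)
    (hsing : {n' | n' ∈ B ∧ ψ n' + ctB B ψ m = (inner ℝ m n' : ℝ)} = {n}) :
    ctB B ψ₀ m = (inner ℝ m n : ℝ) - ψ₀ n ∧ ctB B ψ₁ m = (inner ℝ m n : ℝ) - ψ₁ n := by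
  have hnmem : n ∈ {n' | n' ∈ B ∧ ψ n' + ctB B ψ m = (inner ℝ m n' : ℝ)} := by
    rw [hsing]; exact rfl
  obtain ⟨hnB, hkey⟩ := hnmem
  have h₀ : (inner ℝ m n : ℝ) - ψ₀ n ≤ ctB B ψ₀ m :=
    double_transform_ge A B hAcpt hBne ψ₀ hQ₀ hm hnB
  have h₁ : (inner ℝ m n : ℝ) - ψ₁ n ≤ ctB B ψ₁ m :=
    double_transform_ge A B hAcpt hBne ψ₁ hQ₁ hm hnB
  have hs := hsum m hm
  have hψn : ψ n = (ψ₀ n + ψ₁ n) / 2 := by rw [hψdef]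
  constructor <;> linarith
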